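/- arXiv:1804.07978 — 4 statements merged into one kernel-verified Lean document; each statement's English description precedes it below -/
import Mathlib

section
/- Let (ε_k)_{k≥1} be an i.i.d. sequence of real random variables and let α, β ≥ 0 be constants such that log(α ε_1² + β) is integrable with E[log(α ε_1² + β)] < 0. Then the product ∏_{k=1}^n (α ε_k² + β) converges to 0 almost surely as n → ∞. Consequently, if σ² and ν² are two sequences of random variables driven by the same innovations via σ²_{n+1} = ω + σ²_n(α ε_n² + β) and ν²_{n+1} = ω + ν²_n(α ε_n² + β) (with ω real and arbitrary starting values σ²_1, ν²_1), then |σ²_{n+1} − ν²_{n+1}| = |σ²_1 − ν²_1|·∏_{k=1}^n (α ε_k² + β) → 0 almost surely. -/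
open MeasureTheory ProbabilityTheory Filter

private lemma sum_range_succ_eq_Icc (f : ℕ → ℝ) (n : ℕ) :
    ∑ i ∈ Finset.range (n + 1), f i = f 0 + ∑ k ∈ Finset.Icc 1 n, f k := by
  induction n with
  | zero => simp
  | succ n ih =>
      rw [Finset.sum_range_succ, ih, Finset.sum_Icc_succ_top (Nat.le_add_left 1 n)]
      ring

/-- If `(ε_k)` is i.i.d. with `E[log(α ε₁² + β)] < 0`, then `∏_{k=1}^n (α ε_k² + β) → 0` a.s.;
consequently two GARCH(1,1) volatility processes driven by the same innovations satisfy
`|σ²_{n+1} − ν²_{n+1}| = |σ²_1 − ν²_1| ∏_{k=1}^n (α ε_k² + β) → 0` a.s. -/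
theorem garch11_same_innovations_coalesce
    {Ω : Type*} [MeasurableSpace Ω] (μ : Measure Ω) [IsProbabilityMeasure μ]
    (ε : ℕ → Ω → ℝ) (α β : ℝ) (hα : 0 ≤ α) (hβ : 0 ≤ β)
    (hmeas : ∀ k, Measurable (ε k))
    (hindep_iid : iIndepFun ε μ)
    (hident : ∀ i j, IdentDistrib (ε i) (ε j) μ μ)
    (hint : Integrable (fun x => Real.log (α * (ε 1 x) ^ 2 + β)) μ)
    (hneg : ∫ x, Real.log (α * (ε 1 x) ^ 2 + β) ∂μ < 0)
    (ωc : ℝ) (σsq νsq : ℕ → Ω → ℝ)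
    (hrecσ : ∀ n, 1 ≤ n → ∀ x, σsq (n + 1) x = ωc + σsq n x * (α * (ε n x) ^ 2 + β))
    (hrecν : ∀ n, 1 ≤ n → ∀ x, νsq (n + 1) x = ωc + νsq n x * (α * (ε n x) ^ 2 + β)) :
    (∀ᵐ x ∂μ, Tendsto (fun n => ∏ k ∈ Finset.Icc 1 n, (α * (ε k x) ^ 2 + β))
      atTop (nhds 0)) ∧
    (∀ n, 1 ≤ n → ∀ x, |σsq (n + 1) x - νsq (n + 1) x|
      = |σsq 1 x - νsq 1 x| * ∏ k ∈ Finset.Icc 1 n, (α * (ε k x) ^ 2 + β)) ∧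
    (∀ᵐ x ∂μ, Tendsto (fun n => |σsq (n + 1) x - νsq (n + 1) x|) atTop (nhds 0)) := by
  -- the factor function and its nonnegativity
  set f : ℕ → Ω → ℝ := fun k x => α * (ε k x) ^ 2 + β with hf
  have hfnn : ∀ k x, 0 ≤ f k x := fun k x =>
    add_nonneg (mul_nonneg hα (sq_nonneg _)) hβ
  -- measurable transform
  set g : ℝ → ℝ := fun t => Real.log (α * t ^ 2 + β) with hg
  have hgmeas : Measurable g := by
    apply Real.measurable_log.comp
    exact (measurable_const.mul ((measurable_id.pow_const 2))).add_const β
  set X : ℕ → Ω → ℝ := fun k x => g (ε k x) with hX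
  have hXident : ∀ i j, IdentDistrib (X i) (X j) μ μ := fun i j =>
    (hident i j).comp hgmeas
  have hXint : Integrable (X 0) μ := by
    rw [(hXident 0 1).integrable_iff]
    exact hint
  have hXindep : Pairwise (Function.onFun (IndepFun · · μ) X) := fun i j hij =>
    (hindep_iid.indepFun hij).comp hgmeas hgmeas
  have hE0 : ∫ x, X 0 x ∂μ = ∫ x, Real.log (α * (ε 1 x) ^ 2 + β) ∂μ :=
    (hXident 0 1).integral_eq
  -- strong law
  have hslln := strong_law_ae_real X hXint hXindep (fun i => hXident i 0)
  -- main a.e. statement: the product tends to 0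
  have main : ∀ᵐ x ∂μ, Tendsto (fun n => ∏ k ∈ Finset.Icc 1 n, f k x)
      atTop (nhds 0) := by
    filter_upwards [hslln] with x hx
    by_cases hzero : ∃ k, 1 ≤ k ∧ f k x = 0
    · obtain ⟨k₀, hk₀, hk₀z⟩ := hzero
      have : ∀ᶠ n in atTop, (0 : ℝ) = ∏ k ∈ Finset.Icc 1 n, f k x := by
        filter_upwards [eventually_ge_atTop k₀] with n hn
        exact (Finset.prod_eq_zero (Finset.mem_Icc.2 ⟨hk₀, hn⟩) hk₀z).symm
      exact (tendsto_const_nhds.congr' this)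
    · push_neg at hzero
      have hpos : ∀ k, 1 ≤ k → 0 < f k x := fun k hk =>
        lt_of_le_of_ne (hfnn k x) (Ne.symm (hzero k hk))
      -- sums of X over range (n) tend to -∞
      have hneg' : ∫ x, X 0 x ∂μ < 0 := by rw [hE0]; exact hneg
      have hsum : Tendsto (fun n : ℕ => ∑ i ∈ Finset.range n, X i x) atTop atBot := by
        have h1 : Tendsto (fun n : ℕ => (n : ℝ) *
            ((∑ i ∈ Finset.range n, X i x) / n)) atTop atBot :=
          tendsto_natCast_atTop_atTop.atTop_mul_neg hneg' hx
        apply h1.congr'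
        filter_upwards [eventually_ge_atTop 1] with n hn
        have hn0 : (n : ℝ) ≠ 0 := Nat.cast_ne_zero.2 (by omega)
        field_simp
      -- sums over Icc 1 n tend to -∞
      have hsumIcc : Tendsto (fun n : ℕ => ∑ k ∈ Finset.Icc 1 n, X k x) atTop atBot := by
        have h2 : Tendsto (fun n : ℕ => ∑ i ∈ Finset.range (n + 1), X i x) atTop atBot :=
          hsum.comp (tendsto_add_atTop_nat 1)
        have h3 : Tendsto (fun n : ℕ => (∑ i ∈ Finset.range (n + 1), X i x) - X 0 x)
            atTop atBot := by
          simpa [sub_eq_add_neg] using tendsto_atBot_add_const_right atTop (-X 0 x) h2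
        apply h3.congr
        intro n
        rw [sum_range_succ_eq_Icc (fun i => X i x) n]
        ring
      -- product equals exp of sum
      have hprodeq : ∀ n : ℕ, ∏ k ∈ Finset.Icc 1 n, f k x
          = Real.exp (∑ k ∈ Finset.Icc 1 n, X k x) := by
        intro n
        have hprodpos : 0 < ∏ k ∈ Finset.Icc 1 n, f k x :=
          Finset.prod_pos fun k hk => hpos k (Finset.mem_Icc.1 hk).1
        rw [← Real.exp_log hprodpos]
        congr 1
        rw [Real.log_prod fun k hk => (hpos k (Finset.mem_Icc.1 hk).1).ne']
      have : Tendsto (fun n : ℕ => Real.exp (∑ k ∈ Finset.Icc 1 n, X k x))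
          atTop (nhds 0) := Real.tendsto_exp_atBot.comp hsumIcc
      exact this.congr fun n => (hprodeq n).symm
  -- part 2: the identity
  have part2 : ∀ n, 1 ≤ n → ∀ x, |σsq (n + 1) x - νsq (n + 1) x|
      = |σsq 1 x - νsq 1 x| * ∏ k ∈ Finset.Icc 1 n, f k x := by
    intro n hn
    induction n, hn using Nat.le_induction with
    | base =>
        intro x
        rw [hrecσ 1 le_rfl x, hrecν 1 le_rfl x]
        have : ωc + σsq 1 x * f 1 x - (ωc + νsq 1 x * f 1 x)
            = (σsq 1 x - νsq 1 x) * f 1 x := by ring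
        rw [this, abs_mul, abs_of_nonneg (hfnn 1 x), Finset.Icc_self,
          Finset.prod_singleton]
    | succ n hn ih =>
        intro x
        rw [hrecσ (n + 1) (by omega) x, hrecν (n + 1) (by omega) x]
        have : ωc + σsq (n + 1) x * f (n + 1) x - (ωc + νsq (n + 1) x * f (n + 1) x)
            = (σsq (n + 1) x - νsq (n + 1) x) * f (n + 1) x := by ring
        rw [this, abs_mul, abs_of_nonneg (hfnn (n + 1) x), ih x,
          Finset.prod_Icc_succ_top (by omega) (fun k => f k x)]
        ring
  refine ⟨main, part2, ?_⟩
  filter_upwards [main] with x hx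
  have h1 : Tendsto (fun n => |σsq 1 x - νsq 1 x| * ∏ k ∈ Finset.Icc 1 n, f k x)
      atTop (nhds 0) := by
    simpa using hx.const_mul |σsq 1 x - νsq 1 x|
  apply h1.congr'
  filter_upwards [eventually_ge_atTop 1] with n hn
  exact (part2 n hn x).symm
end

section
/- Let r ≥ 1, let λ_1, …, λ_r ≥ 0 with ∑_{j=1}^r λ_j ≥ 1, and let ω > 0. Let (m_n)_{n≥1} be a sequence of positive reals satisfying m_i = ω + ∑_{j=1}^r λ_j m_{i−j} for all i > r. Then m_n → +∞ as n → ∞. -/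
open Filter

/-- If `λ_1, …, λ_r ≥ 0` with `∑ λ_j ≥ 1` and `ω > 0`, then any positive sequence satisfying
`m_i = ω + ∑_{j=1}^r λ_j m_{i−j}` for all `i > r` tends to `+∞`. -/
theorem garch_pq_mean_recursion_explodes
    (r : ℕ) (hr : 1 ≤ r) (lam : ℕ → ℝ) (hlam : ∀ j, 0 ≤ lam j)
    (hsum : 1 ≤ ∑ j ∈ Finset.Icc 1 r, lam j) (ω : ℝ) (hω : 0 < ω)
    (m : ℕ → ℝ) (hm : ∀ n, 0 < m n)
    (hrec : ∀ i, r < i → m i = ω + ∑ j ∈ Finset.Icc 1 r, lam j * m (i - j)) :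
    Tendsto m atTop atTop := by
  have hrpos : 0 < r := hr
  have hne : (Finset.Icc 1 r).Nonempty := ⟨1, by simp [hr]⟩
  set μ := (Finset.Icc 1 r).inf' hne m with hμdef
  have hμle : ∀ k ∈ Finset.Icc 1 r, μ ≤ m k := fun k hk => Finset.inf'_le m hk
  have hμpos : 0 < μ := by
    obtain ⟨k, hk, hkeq⟩ := Finset.exists_mem_eq_inf' hne m
    rw [hμdef]
    rw [hkeq]
    exact hm k
  -- key lower bound
  have key : ∀ n, 1 ≤ n → μ + ω * (((n - 1) / r : ℕ) : ℝ) ≤ m n := by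
    intro n
    induction n using Nat.strong_induction_on with
    | _ n ih =>
      intro hn1
      by_cases hcase : n ≤ r
      · have : (n - 1) / r = 0 := Nat.div_eq_of_lt (by omega)
        rw [this]
        simpa using hμle n (Finset.mem_Icc.mpr ⟨hn1, hcase⟩)
      · push_neg at hcase
        have hdiv : ((n - 1) / r : ℕ) = (n - 1 - r) / r + 1 := by
          have h1 : n - 1 - r + r = n - 1 := by omega
          calc (n - 1) / r = (n - 1 - r + r) / r := by rw [h1]
            _ = (n - 1 - r) / r + 1 := Nat.add_div_right _ hrpos
        have hCpos : (0:ℝ) < μ + ω * (((n - 1 - r) / r : ℕ) : ℝ) := by positivity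
        have hterm : ∀ j ∈ Finset.Icc 1 r,
            lam j * (μ + ω * (((n - 1 - r) / r : ℕ) : ℝ)) ≤ lam j * m (n - j) := by
          intro j hj
          rw [Finset.mem_Icc] at hj
          have hlt : n - j < n := by omega
          have h1 : 1 ≤ n - j := by omega
          have hle := ih (n - j) hlt h1
          have hdivle : (n - 1 - r) / r ≤ (n - j - 1) / r :=
            Nat.div_le_div_right (by omega)
          have hq : ((((n - 1 - r) / r : ℕ)) : ℝ) ≤ (((n - j - 1) / r : ℕ) : ℝ) := by
            exact_mod_cast hdivle
          have : μ + ω * (((n - 1 - r) / r : ℕ) : ℝ)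
              ≤ μ + ω * (((n - j - 1) / r : ℕ) : ℝ) := by nlinarith
          exact mul_le_mul_of_nonneg_left (this.trans hle) (hlam j)
        have hsum2 : (∑ j ∈ Finset.Icc 1 r, lam j) * (μ + ω * (((n - 1 - r) / r : ℕ) : ℝ)) ≤
            ∑ j ∈ Finset.Icc 1 r, lam j * m (n - j) := by
          rw [Finset.sum_mul]
          exact Finset.sum_le_sum hterm
        have hCle : μ + ω * (((n - 1 - r) / r : ℕ) : ℝ) ≤
            (∑ j ∈ Finset.Icc 1 r, lam j) * (μ + ω * (((n - 1 - r) / r : ℕ) : ℝ)) :=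
          le_mul_of_one_le_left hCpos.le hsum
        rw [hrec n hcase, hdiv]
        push_cast
        rw [mul_add, mul_one]
        linarith
  -- the lower bound tends to atTop
  have hdivtend : Tendsto (fun n : ℕ => (n - 1) / r) atTop atTop := by
    apply tendsto_atTop_atTop.mpr
    intro b
    refine ⟨r * b + 1, fun n hn => ?_⟩
    rw [Nat.le_div_iff_mul_le hrpos, mul_comm]
    omega
  have htend : Tendsto (fun n : ℕ => μ + ω * (((n - 1) / r : ℕ) : ℝ)) atTop atTop := by
    apply tendsto_atTop_add_const_left
    exact (tendsto_natCast_atTop_atTop.comp hdivtend).const_mul_atTop hω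
  refine tendsto_atTop_mono' atTop ?_ htend
  filter_upwards [eventually_ge_atTop 1] with n hn
  exact key n hn
end

section
/- Let 0 < ν < 1. Then the moment generating function of GED(ν) does not exist for any t ≠ 0: for every t > 0 (and by symmetry every t < 0), the integral ∫_ℝ e^{tx} f_ν(x) dx diverges, i.e. the function x ↦ e^{tx} f_ν(x) is not integrable on ℝ. -/
open MeasureTheory

/-- Scale parameter `λ = 2^{−1/ν} (Γ(1/ν)/Γ(3/ν))^{1/2}` of the generalized error
distribution `GED(ν)`. -/
noncomputable def gedScale (ν : ℝ) : ℝ :=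
  (2 : ℝ) ^ (-(1 : ℝ) / ν) * Real.sqrt (Real.Gamma (1 / ν) / Real.Gamma (3 / ν))

/-- Density of the generalized error distribution `GED(ν)`:
`f_ν(x) = ν exp(−(1/2)|x/λ|^ν) / (λ 2^{1+1/ν} Γ(1/ν))`. -/
noncomputable def gedDensity (ν x : ℝ) : ℝ :=
  ν * Real.exp (-(1 / 2) * |x / gedScale ν| ^ ν) /
    (gedScale ν * (2 : ℝ) ^ (1 + 1 / ν) * Real.Gamma (1 / ν))

lemma gedScale_pos {ν : ℝ} (hν0 : 0 < ν) : 0 < gedScale ν := by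
  apply mul_pos (Real.rpow_pos_of_pos two_pos _)
  exact Real.sqrt_pos.mpr (div_pos (Real.Gamma_pos_of_pos (by positivity))
    (Real.Gamma_pos_of_pos (by positivity)))

lemma gedDensity_even (ν x : ℝ) : gedDensity ν (-x) = gedDensity ν x := by
  simp [gedDensity, neg_div, abs_neg]

lemma ged_aux (ν : ℝ) (hν0 : 0 < ν) (hν1 : ν < 1) (t : ℝ) (ht : 0 < t) :
    ¬ Integrable (fun x => Real.exp (t * x) * gedDensity ν x) (volume) := by
  intro hI
  set L := gedScale ν with hLdef
  have hL : 0 < L := gedScale_pos hν0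
  have hD : 0 < L * (2 : ℝ) ^ (1 + 1 / ν) * Real.Gamma (1 / ν) := by
    apply mul_pos (mul_pos hL (Real.rpow_pos_of_pos two_pos _))
    exact Real.Gamma_pos_of_pos (by positivity)
  set c : ℝ := ν / (L * (2 : ℝ) ^ (1 + 1 / ν) * Real.Gamma (1 / ν)) with hcdef
  have hc : 0 < c := div_pos hν0 hD
  set B : ℝ := 1 / (2 * t * L ^ ν) with hBdef
  have hB : 0 < B := by
    apply div_pos one_pos
    positivity
  set A : ℝ := max 1 (B ^ (1 / (1 - ν))) with hAdef
  -- key pointwise bound on [A, ∞)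
  have key : ∀ x ∈ Set.Ici A, c ≤ Real.exp (t * x) * gedDensity ν x := by
    intro x hx
    have hx1 : (1 : ℝ) ≤ x := le_trans (le_max_left _ _) hx
    have hx0 : 0 < x := lt_of_lt_of_le one_pos hx1
    have hxB : B ^ (1 / (1 - ν)) ≤ x := le_trans (le_max_right _ _) hx
    have h1ν : 0 < 1 - ν := by linarith
    -- x ^ (1 - ν) ≥ B
    have hpow : B ≤ x ^ (1 - ν) := by
      have := Real.rpow_le_rpow (le_of_lt (Real.rpow_pos_of_pos hB _)) hxB (le_of_lt h1ν)
      rwa [← Real.rpow_mul hB.le, one_div, inv_mul_cancel₀ (ne_of_gt h1ν),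
        Real.rpow_one] at this
    -- t * x ≥ (1/2) * (x/L)^ν
    have hsplit : x = x ^ ν * x ^ (1 - ν) := by
      rw [← Real.rpow_add hx0]; norm_num
    have hb : (1 / 2 : ℝ) * (x / L) ^ ν ≤ t * x := by
      have hxL : (x / L) ^ ν = x ^ ν / L ^ ν := Real.div_rpow hx0.le hL.le ν
      rw [hxL]
      have hxν : 0 < x ^ ν := Real.rpow_pos_of_pos hx0 _
      have h2 : t * x = t * (x ^ ν * x ^ (1 - ν)) := by rw [← hsplit]
      rw [h2]
      have h3 : t * (x ^ ν * B) ≤ t * (x ^ ν * x ^ (1 - ν)) := by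
        apply mul_le_mul_of_nonneg_left _ ht.le
        exact mul_le_mul_of_nonneg_left hpow hxν.le
      refine le_trans (le_of_eq ?_) h3
      have hLν : (0:ℝ) < L ^ ν := Real.rpow_pos_of_pos hL _
      rw [hBdef]
      field_simp
    have habs : |x / L| = x / L := abs_of_pos (div_pos hx0 hL)
    have : Real.exp (t * x) * gedDensity ν x
        = c * Real.exp (t * x + -(1 / 2) * (x / L) ^ ν) := by
      rw [gedDensity, habs, Real.exp_add, hcdef]
      ring
    rw [this]
    have : (0 : ℝ) ≤ t * x + -(1 / 2) * (x / L) ^ ν := by linarith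
    calc c = c * Real.exp 0 := by simp
    _ ≤ c * Real.exp (t * x + -(1 / 2) * (x / L) ^ ν) := by
        apply mul_le_mul_of_nonneg_left (Real.exp_le_exp.mpr this) hc.le
  -- constant c is integrable on Ici A, contradiction
  have hIA : IntegrableOn (fun x => Real.exp (t * x) * gedDensity ν x) (Set.Ici A) volume :=
    hI.integrableOn
  have hconst : IntegrableOn (fun _ : ℝ => c) (Set.Ici A) volume := by
    apply Integrable.mono' hIA aestronglyMeasurable_const
    filter_upwards [self_mem_ae_restrict measurableSet_Ici] with x hx
    rw [Real.norm_eq_abs, abs_of_pos hc]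
    exact key x hx
  rw [integrableOn_const_iff] at hconst
  rcases hconst with h | h
  · exact hc.ne' (by simpa using h)
  · simp [Real.volume_Ici] at h

/-- For `0 < ν < 1` the moment generating function of `GED(ν)` does not exist at any
`t ≠ 0`: the function `x ↦ e^{tx} f_ν(x)` is not integrable on `ℝ`. -/
theorem ged_mgf_not_exists_of_shape_lt_one
    (ν : ℝ) (hν0 : 0 < ν) (hν1 : ν < 1) :
    ∀ t : ℝ, t ≠ 0 →
      ¬ Integrable (fun x => Real.exp (t * x) * gedDensity ν x) (volume) := by
  intro t ht hI
  rcases lt_or_gt_of_ne ht with htneg | htpos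
  · have hcomp : Integrable
        ((fun x => Real.exp (t * x) * gedDensity ν x) ∘ Neg.neg) volume :=
      ((Measure.measurePreserving_neg (volume : Measure ℝ)).integrable_comp_emb
        (MeasurableEquiv.neg ℝ).measurableEmbedding).mpr hI
    have heq : ((fun x => Real.exp (t * x) * gedDensity ν x) ∘ Neg.neg)
        = fun x => Real.exp ((-t) * x) * gedDensity ν x := by
      funext x
      simp [Function.comp, gedDensity_even, mul_comm]
    rw [heq] at hcomp
    exact ged_aux ν hν0 hν1 (-t) (by linarith) hcomp
  · exact ged_aux ν hν0 hν1 t htpos hI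
end

section
/- Let ν > 1. Then for every real t, the moment generating function of GED(ν) admits the everywhere-convergent power series representation ∫_ℝ e^{tx} f_ν(x) dx = ∑_{m=0}^∞ (t^{2m}/(2m)!) · (Γ(1/ν)/Γ(3/ν))^m · Γ((2m+1)/ν) / Γ(1/ν). -/
open MeasureTheory

open Real Set

section Aux

lemma ged_integrable_comp_abs {f : ℝ → ℝ} (hf : IntegrableOn (fun x => f |x|) (Ioi 0)) :
    Integrable fun x => f |x| := by
  have int_Iic : IntegrableOn (fun x ↦ f |x|) (Iic 0) := by
    rw [← Measure.map_neg_eq_self (volume : Measure ℝ)]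
    have m : MeasurableEmbedding fun x : ℝ => -x := (Homeomorph.neg ℝ).measurableEmbedding
    rw [m.integrableOn_map_iff]
    simp_rw [Function.comp_def, abs_neg, neg_preimage, neg_Iic, neg_zero]
    exact Iff.mpr integrableOn_Ici_iff_integrableOn_Ioi hf
  rw [← integrableOn_univ, ← Iic_union_Ioi (a := (0:ℝ))]
  exact int_Iic.union hf

lemma ged_integrable_abs_pow_mul_exp {p b : ℝ} (hp : 1 ≤ p) (hb : 0 < b) (n : ℕ) :
    Integrable fun x : ℝ => |x| ^ n * Real.exp (-b * |x| ^ p) := by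
  set f : ℝ → ℝ := fun y => y ^ (n : ℝ) * Real.exp (-b * y ^ p) with hfdef
  have h0 : IntegrableOn f (Ioi 0) :=
    integrableOn_rpow_mul_exp_neg_mul_rpow (neg_one_lt_zero.trans_le (Nat.cast_nonneg n)) (lt_of_lt_of_le zero_lt_one hp) hb
  have h1 : IntegrableOn (fun x => f |x|) (Ioi 0) := by
    refine h0.congr_fun (fun x hx => ?_) measurableSet_Ioi
    rw [abs_of_pos (mem_Ioi.mp hx)]
  have h2 := ged_integrable_comp_abs h1
  have h3 : (fun x : ℝ => f |x|) = fun x : ℝ => |x| ^ n * Real.exp (-b * |x| ^ p) := by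
    funext x
    simp [hfdef, Real.rpow_natCast]
  rwa [h3] at h2

lemma ged_integral_abs_pow_mul_exp {p b : ℝ} (hp : 1 ≤ p) (hb : 0 < b) (n : ℕ) :
    ∫ x : ℝ, |x| ^ n * Real.exp (-b * |x| ^ p)
      = 2 * (b ^ (-((n : ℝ) + 1) / p) * (1 / p) * Real.Gamma (((n : ℝ) + 1) / p)) := by
  set f : ℝ → ℝ := fun y => y ^ (n : ℝ) * Real.exp (-b * y ^ p) with hfdef
  have h3 : (fun x : ℝ => |x| ^ n * Real.exp (-b * |x| ^ p)) = fun x : ℝ => f |x| := by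
    funext x
    simp [hfdef, Real.rpow_natCast]
  rw [h3, integral_comp_abs (f := f), hfdef,
    integral_rpow_mul_exp_neg_mul_rpow (lt_of_lt_of_le zero_lt_one hp)
      (neg_one_lt_zero.trans_le (Nat.cast_nonneg n)) hb]

lemma ged_integral_odd_eq_zero {g : ℝ → ℝ} (hg : ∀ x, g (-x) = -g x) : ∫ x : ℝ, g x = 0 := by
  have h1 : ∫ x : ℝ, g (-x) = ∫ x : ℝ, g x :=
    (Measure.measurePreserving_neg (volume : Measure ℝ)).integral_comp
      (Homeomorph.neg ℝ).measurableEmbedding g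
  have h2 : ∫ x : ℝ, g (-x) = -∫ x : ℝ, g x := by
    simp_rw [hg]
    exact integral_neg g
  linarith

end Aux

/-- For `ν > 1`, the moment generating function of `GED(ν)` has the everywhere-convergent
power series `M(t) = ∑_{m≥0} (t^{2m}/(2m)!) (Γ(1/ν)/Γ(3/ν))^m Γ((2m+1)/ν)/Γ(1/ν)`. -/
theorem ged_mgf_power_series (ν : ℝ) (hν : 1 < ν) :
    ∀ t : ℝ,
      HasSum
        (fun m : ℕ =>
          t ^ (2 * m) / (Nat.factorial (2 * m) : ℝ) *
            ((Real.Gamma (1 / ν) / Real.Gamma (3 / ν)) ^ m *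
              (Real.Gamma ((2 * (m : ℝ) + 1) / ν) / Real.Gamma (1 / ν))))
        (∫ x, Real.exp (t * x) * gedDensity ν x) := by
  intro t
  have hν0 : (0:ℝ) < ν := lt_trans one_pos hν
  have hν0' : ν ≠ 0 := ne_of_gt hν0
  have hG1 : 0 < Real.Gamma (1 / ν) := Real.Gamma_pos_of_pos (by positivity)
  have hG3 : 0 < Real.Gamma (3 / ν) := Real.Gamma_pos_of_pos (by positivity)
  set s : ℝ := Real.sqrt (Real.Gamma (1 / ν) / Real.Gamma (3 / ν)) with hs
  have hs0 : 0 < s := Real.sqrt_pos.mpr (by positivity)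
  have hsq : s ^ 2 = Real.Gamma (1 / ν) / Real.Gamma (3 / ν) := Real.sq_sqrt (by positivity)
  have hl : gedScale ν = 2 ^ (-(1:ℝ) / ν) * s := rfl
  have hl0 : 0 < gedScale ν := by rw [hl]; positivity
  set l : ℝ := gedScale ν with hldef
  set c : ℝ := ν / (l * 2 ^ (1 + 1 / ν) * Real.Gamma (1 / ν)) with hc
  have hc0 : 0 < c := by
    apply div_pos hν0
    have : (0:ℝ) < (2:ℝ) ^ (1 + 1/ν) := Real.rpow_pos_of_pos two_pos _
    positivity
  set b : ℝ := (s ^ ν)⁻¹ with hb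
  have hb0 : 0 < b := by
    rw [hb]
    exact inv_pos.mpr (Real.rpow_pos_of_pos hs0 _)
  have hlν : 2 * l ^ ν = s ^ ν := by
    rw [hl, Real.mul_rpow (Real.rpow_nonneg two_pos.le _) hs0.le,
      ← Real.rpow_mul two_pos.le]
    rw [show (-(1:ℝ)/ν) * ν = -1 by field_simp, Real.rpow_neg_one]
    ring
  have hdens : ∀ x : ℝ, gedDensity ν x = c * Real.exp (-b * |x| ^ ν) := by
    intro x
    have hxl : |x / l| ^ ν = |x| ^ ν / l ^ ν := by
      rw [abs_div, abs_of_pos hl0, Real.div_rpow (abs_nonneg x) hl0.le]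
    have hexp : -(1/2) * (|x| ^ ν / l ^ ν) = -b * |x| ^ ν := by
      have hlν0 : l ^ ν ≠ 0 := ne_of_gt (Real.rpow_pos_of_pos hl0 _)
      have hb2 : b = (2 * l ^ ν)⁻¹ := by rw [hb, ← hlν]
      rw [hb2]
      field_simp
    rw [gedDensity, hxl, hexp, hc]
    ring
  -- the terms of the exponential series
  set F : ℕ → ℝ → ℝ := fun n x => (t * x) ^ n / (Nat.factorial n : ℝ) * gedDensity ν x with hF
  have hFeq : ∀ n x, F n x = (t ^ n / (Nat.factorial n : ℝ) * c) *
      (x ^ n * Real.exp (-b * |x| ^ ν)) := by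
    intro n x
    rw [hF]
    simp only [hdens x, mul_pow]
    ring
  have hcont : ∀ n : ℕ, Continuous fun x : ℝ => x ^ n * Real.exp (-b * |x| ^ ν) := by
    intro n
    refine (continuous_pow n).mul (Real.continuous_exp.comp ?_)
    exact continuous_const.mul (continuous_abs.rpow_const fun x => Or.inr hν0.le)
  have hFint : ∀ n, Integrable (F n) := by
    intro n
    have base := ged_integrable_abs_pow_mul_exp hν.le hb0 n
    have h1 : Integrable fun x : ℝ => x ^ n * Real.exp (-b * |x| ^ ν) := by
      refine base.mono' ((hcont n).aestronglyMeasurable) ?_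
      filter_upwards with x
      rw [Real.norm_eq_abs, abs_mul, abs_pow, Real.abs_exp]
    have : F n = fun x => (t ^ n / (Nat.factorial n : ℝ) * c) *
        (x ^ n * Real.exp (-b * |x| ^ ν)) := funext fun x => hFeq n x
    rw [this]
    exact h1.const_mul _
  have hnorm : ∀ n, ∫ x, ‖F n x‖ = (|t| ^ n / (Nat.factorial n : ℝ) * c) *
      ∫ x : ℝ, |x| ^ n * Real.exp (-b * |x| ^ ν) := by
    intro n
    have hptw : ∀ x : ℝ, ‖F n x‖ = (|t| ^ n / (Nat.factorial n : ℝ) * c) *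
        (|x| ^ n * Real.exp (-b * |x| ^ ν)) := by
      intro x
      rw [hFeq n x, Real.norm_eq_abs]
      simp only [abs_mul, abs_div, abs_pow, Real.abs_exp, Nat.abs_cast, abs_of_pos hc0]
      try ring
    rw [integral_congr_ae (Filter.Eventually.of_forall hptw), integral_const_mul]
  -- exponential-tail bound
  set B : ℝ := |t| + 1 with hB
  have hB0 : (0:ℝ) < B := by positivity
  set R : ℝ := (B / b) ^ (ν - 1)⁻¹ with hR
  have hR0 : 0 < R := Real.rpow_pos_of_pos (div_pos hB0 hb0) _
  have hbound : ∀ y : ℝ, 0 ≤ y →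
      Real.exp (-b * y ^ ν) ≤ Real.exp (B * R) * Real.exp (-B * y) := by
    intro y hy
    rw [← Real.exp_add, Real.exp_le_exp]
    rcases le_or_gt y R with h | h
    · have h1 : 0 ≤ b * y ^ ν := by positivity
      nlinarith [mul_le_mul_of_nonneg_left h hB0.le]
    · have hyp : 0 < y := lt_trans hR0 h
      have h2 : R ^ (ν - 1) ≤ y ^ (ν - 1) :=
        Real.rpow_le_rpow hR0.le h.le (by linarith)
      have h3 : R ^ (ν - 1) = B / b := by
        rw [hR, ← Real.rpow_mul (div_pos hB0 hb0).le, inv_mul_cancel₀ (by linarith : ν - 1 ≠ 0),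
          Real.rpow_one]
      have h4 : B ≤ b * y ^ (ν - 1) := by
        rw [h3] at h2
        rw [div_le_iff₀ hb0] at h2
        linarith [h2]
      have h5 : y ^ ν = y ^ (ν - 1) * y := by
        rw [← Real.rpow_add_one (ne_of_gt hyp) (ν - 1)]
        norm_num
      have h6 : B * y ≤ b * y ^ ν := by
        rw [h5, ← mul_assoc]
        exact mul_le_mul_of_nonneg_right h4 hy
      nlinarith [mul_pos hB0 hR0]
  have hFsum : Summable fun n => ∫ x, ‖F n x‖ := by
    have hgeo : Summable fun n : ℕ => (c * Real.exp (B * R) * (2 / B)) * (|t| / B) ^ n := by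
      refine Summable.mul_left _ (summable_geometric_of_lt_one (by positivity) ?_)
      rw [div_lt_one hB0, hB]
      linarith
    refine Summable.of_nonneg_of_le (fun n => ?_) (fun n => ?_) hgeo
    · exact integral_nonneg fun x => norm_nonneg _
    · rw [hnorm n]
      have hint1 := ged_integrable_abs_pow_mul_exp hν.le hb0 n
      have hint2 : Integrable fun x : ℝ =>
          Real.exp (B * R) * (|x| ^ n * Real.exp (-B * |x|)) := by
        have := ged_integrable_abs_pow_mul_exp (le_refl 1) hB0 n
        simp only [Real.rpow_one] at this
        exact this.const_mul _
      have hmono : (∫ x : ℝ, |x| ^ n * Real.exp (-b * |x| ^ ν))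
          ≤ ∫ x : ℝ, Real.exp (B * R) * (|x| ^ n * Real.exp (-B * |x|)) := by
        refine integral_mono hint1 hint2 fun x => ?_
        have h1 := hbound |x| (abs_nonneg x)
        have h2 : (0:ℝ) ≤ |x| ^ n := by positivity
        calc |x| ^ n * Real.exp (-b * |x| ^ ν)
            ≤ |x| ^ n * (Real.exp (B * R) * Real.exp (-B * |x|)) :=
              mul_le_mul_of_nonneg_left h1 h2
          _ = Real.exp (B * R) * (|x| ^ n * Real.exp (-B * |x|)) := by ring
      have hval : (∫ x : ℝ, |x| ^ n * Real.exp (-B * |x|))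
          = 2 * ((Nat.factorial n : ℝ) / B ^ (n + 1)) := by
        have h := ged_integral_abs_pow_mul_exp (le_refl 1) hB0 n
        simp only [Real.rpow_one] at h
        rw [h, div_one, div_one, div_one, Real.Gamma_nat_eq_factorial, Real.rpow_neg hB0.le,
          show ((n:ℝ) + 1) = ((n + 1 : ℕ) : ℝ) by push_cast; ring, Real.rpow_natCast]
        ring
      calc (|t| ^ n / (Nat.factorial n : ℝ) * c) *
            ∫ x : ℝ, |x| ^ n * Real.exp (-b * |x| ^ ν)
          ≤ (|t| ^ n / (Nat.factorial n : ℝ) * c) *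
            ∫ x : ℝ, Real.exp (B * R) * (|x| ^ n * Real.exp (-B * |x|)) := by
            refine mul_le_mul_of_nonneg_left hmono ?_
            have : (0:ℝ) < (Nat.factorial n : ℝ) := by positivity
            positivity
        _ = (c * Real.exp (B * R) * (2 / B)) * (|t| / B) ^ n := by
            rw [integral_const_mul, hval]
            have hfac : (Nat.factorial n : ℝ) ≠ 0 := by positivity
            have hBn : (B : ℝ) ^ (n + 1) ≠ 0 := by positivity
            field_simp
            rw [div_pow, pow_succ]; field_simp
  have htsum : ∀ x : ℝ, ∑' n, F n x = Real.exp (t * x) * gedDensity ν x := by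
    intro x
    rw [hF]
    rw [tsum_mul_right]
    congr 1
    rw [Real.exp_eq_exp_ℝ, NormedSpace.exp_eq_tsum_div]
  have hmain : HasSum (fun n => ∫ x, F n x) (∫ x, Real.exp (t * x) * gedDensity ν x) := by
    have h := hasSum_integral_of_summable_integral_norm hFint hFsum
    rwa [integral_congr_ae (Filter.Eventually.of_forall htsum)] at h
  -- odd terms vanish
  have hodd : ∀ n : ℕ, Odd n → ∫ x, F n x = 0 := by
    intro n hn
    apply ged_integral_odd_eq_zero
    intro x
    rw [hFeq n x, hFeq n (-x)]
    rw [hn.neg_pow, abs_neg]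
    ring
  -- even terms
  have heven : ∀ m : ℕ, ∫ x, F (2 * m) x =
      t ^ (2 * m) / (Nat.factorial (2 * m) : ℝ) *
        ((Real.Gamma (1 / ν) / Real.Gamma (3 / ν)) ^ m *
          (Real.Gamma ((2 * (m : ℝ) + 1) / ν) / Real.Gamma (1 / ν))) := by
    intro m
    have hFe : ∀ x : ℝ, F (2 * m) x = (t ^ (2 * m) / (Nat.factorial (2 * m) : ℝ) * c) *
        (|x| ^ (2 * m) * Real.exp (-b * |x| ^ ν)) := by
      intro x
      rw [hFeq (2 * m) x, (even_two_mul m).pow_abs]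
    rw [integral_congr_ae (Filter.Eventually.of_forall hFe), integral_const_mul,
      ged_integral_abs_pow_mul_exp hν.le hb0 (2 * m)]
    have hbrw : b ^ (-(((2 * m : ℕ) : ℝ) + 1) / ν) = s * (s ^ 2) ^ m := by
      have hbneg : b = s ^ (-ν) := by rw [hb, Real.rpow_neg hs0.le]
      rw [hbneg, ← Real.rpow_mul hs0.le]
      have hex : (-ν) * (-(((2 * m : ℕ) : ℝ) + 1) / ν) = ((2 * m : ℕ) : ℝ) + 1 := by
        field_simp
      rw [hex, show (((2 * m : ℕ) : ℝ) + 1) = ((2 * m + 1 : ℕ) : ℝ) by push_cast; ring,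
        Real.rpow_natCast]
      rw [pow_succ, pow_mul]
      ring
    have h2l : l * 2 ^ (1 + 1 / ν) = 2 * s := by
      rw [hl]
      calc (2 : ℝ) ^ (-(1:ℝ) / ν) * s * 2 ^ (1 + 1 / ν)
          = ((2:ℝ) ^ (-(1:ℝ) / ν) * 2 ^ (1 + 1 / ν)) * s := by ring
        _ = (2:ℝ) ^ (-(1:ℝ) / ν + (1 + 1 / ν)) * s := by
            rw [← Real.rpow_add two_pos]
        _ = 2 * s := by
            rw [show (-(1:ℝ) / ν + (1 + 1 / ν)) = 1 by ring, Real.rpow_one]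
    rw [hbrw, hc, h2l]
    rw [← hsq]
    have hfac : (Nat.factorial (2 * m) : ℝ) ≠ 0 := by positivity
    have hcast : (((2 * m : ℕ) : ℝ) + 1) = 2 * (m : ℝ) + 1 := by push_cast; ring
    rw [hcast]
    field_simp
  -- reindex over even integers
  have hinj : Function.Injective (fun m : ℕ => 2 * m) := fun a b h => by
    simp only at h; omega
  have h0 : ∀ n : ℕ, n ∉ Set.range (fun m : ℕ => 2 * m) → (∫ x, F n x) = 0 := by
    intro n hn
    rcases Nat.even_or_odd n with he | ho
    · obtain ⟨k, hk⟩ := he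
      exact absurd ⟨k, by simp only; omega⟩ hn
    · exact hodd n ho
  have hfinal := (hinj.hasSum_iff h0).mpr hmain
  have : (fun m : ℕ => ∫ x, F (2 * m) x) =
      fun m : ℕ =>
        t ^ (2 * m) / (Nat.factorial (2 * m) : ℝ) *
          ((Real.Gamma (1 / ν) / Real.Gamma (3 / ν)) ^ m *
            (Real.Gamma ((2 * (m : ℝ) + 1) / ν) / Real.Gamma (1 / ν))) :=
    funext heven
  rwa [← this]
end
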